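/- Let H be a Hopf algebra over a field k with bijective antipode, and let M be a left H-module and right H-comodule satisfying the generalized Yetter-Drinfeld condition of degree -i: ρ(hm) = h₍₂₎m₍₀₎ ⊗ h₍₃₎m₍₁₎S^{2i-1}(h₍₁₎). Then for every left H-module V, the map Φ : V ⊗ M → M ⊗ V defined by Φ(v ⊗ m) = m₍₀₎ ⊗ m₍₁₎v is a morphism of left H-modules, where V ⊗ M carries the action h·(v ⊗ m) = S^{2i}(h₍₁₎)v ⊗ h₍₂₎m (left factor twisted by S^{2i}) and M ⊗ V carries the diagonal action h·(m ⊗ v) = h₍₁₎m ⊗ h₍₂₎v. -/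

import Mathlib

open TensorProduct

noncomputable section

variable (k : Type) [Field k]
variable (H : Type) [Ring H] [HopfAlgebra k H]

/-- The action of `H` on a left `H`-module `M`, as a `k`-bilinear map. -/
def smulL (M : Type) [AddCommGroup M] [Module k M] [Module H M]
    [IsScalarTower k H M] [SMulCommClass k H M] : H →ₗ[k] M →ₗ[k] M where
  toFun h :=
    { toFun := fun m => h • m
      map_add' := fun _ _ => smul_add _ _ _
      map_smul' := fun c m => (smul_comm c h m).symm }
  map_add' := fun a b => LinearMap.ext fun m => add_smul a b m
  map_smul' := fun c a => LinearMap.ext fun m => smul_assoc c a m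

/-- The action of `H` on `M` as a linear map `H ⊗ M → M`. -/
def actM (M : Type) [AddCommGroup M] [Module k M] [Module H M]
    [IsScalarTower k H M] [SMulCommClass k H M] : H ⊗[k] M →ₗ[k] M :=
  TensorProduct.lift (smulL k H M)

/-- The diagonal action on a tensor product, built from two `k`-bilinear actions
via comultiplication: `h ↦ (x ⊗ y ↦ α(h₍₁₎)(x) ⊗ β(h₍₂₎)(y))`. -/
def diagAct {X Y : Type} [AddCommGroup X] [Module k X] [AddCommGroup Y] [Module k Y]
    (α : H →ₗ[k] X →ₗ[k] X) (β : H →ₗ[k] Y →ₗ[k] Y) :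
    H →ₗ[k] (X ⊗[k] Y →ₗ[k] X ⊗[k] Y) :=
  (TensorProduct.homTensorHomMap (R := k) (R₂ := k) (σ₁₂ := RingHom.id k) (M := X) (N := Y)
    (M₂ := X) (N₂ := Y)) ∘ₗ (TensorProduct.map α β) ∘ₗ
    (Coalgebra.comul (R := k) (A := H))

/-- Given `f : H ⊗ M → M ⊗ H` and `s : H → H`, the map
`h ⊗ m ↦ f(h₍₂₎ ⊗ m)₍M₎ ⊗ f(h₍₂₎ ⊗ m)₍H₎ * s(h₍₁₎)`
(in Sweedler notation, e.g. `(h₍₂₎m)₍₀₎ ⊗ (h₍₂₎m)₍₁₎ s(h₍₁₎)` when `f = ρ ∘ act`). -/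
def twistR {M : Type} [AddCommGroup M] [Module k M]
    (f : H ⊗[k] M →ₗ[k] M ⊗[k] H) (s : H →ₗ[k] H) : H ⊗[k] M →ₗ[k] M ⊗[k] H :=
  (LinearMap.lTensor M (LinearMap.mul' k H)) ∘ₗ
  (TensorProduct.assoc k M H H).toLinearMap ∘ₗ
  (TensorProduct.comm k H (M ⊗[k] H)).toLinearMap ∘ₗ
  (TensorProduct.map s f) ∘ₗ
  (TensorProduct.assoc k H H M).toLinearMap ∘ₗ
  (LinearMap.rTensor M (Coalgebra.comul (R := k) (A := H)))

/-- The map `h ⊗ m ↦ h₍₁₎·m₍₀₎ ⊗ h₍₂₎·m₍₁₎`. -/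
def ydR {M : Type} [AddCommGroup M] [Module k M]
    (act : H ⊗[k] M →ₗ[k] M) (ρ : M →ₗ[k] M ⊗[k] H) : H ⊗[k] M →ₗ[k] M ⊗[k] H :=
  (TensorProduct.map act (LinearMap.mul' k H)) ∘ₗ
  (TensorProduct.tensorTensorTensorComm k H H M H).toLinearMap ∘ₗ
  (TensorProduct.map (Coalgebra.comul (R := k) (A := H)) ρ)

/-- The map `Φ : V ⊗ M → M ⊗ V`, `v ⊗ m ↦ m₍₀₎ ⊗ m₍₁₎·v`. -/
def PhiMap {M V : Type} [AddCommGroup M] [Module k M] [AddCommGroup V] [Module k V]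
    (ρ : M →ₗ[k] M ⊗[k] H) (actV : H ⊗[k] V →ₗ[k] V) : V ⊗[k] M →ₗ[k] M ⊗[k] V :=
  (LinearMap.lTensor M actV) ∘ₗ
  (TensorProduct.assoc k M H V).toLinearMap ∘ₗ
  (LinearMap.rTensor V ρ) ∘ₗ
  (TensorProduct.comm k V M).toLinearMap

/-- The map `m ↦ s(m₍₁₎)·m₍₀₎`. -/
def stabMap {M : Type} [AddCommGroup M] [Module k M] [Module H M]
    [IsScalarTower k H M] [SMulCommClass k H M]
    (ρ : M →ₗ[k] M ⊗[k] H) (s : H →ₗ[k] H) : M →ₗ[k] M :=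
  (actM k H M) ∘ₗ (LinearMap.rTensor M s) ∘ₗ (TensorProduct.comm k M H).toLinearMap ∘ₗ ρ

/-- The map `M ⊗ V → M ⊗ V`, `m ⊗ v ↦ m₍₀₎ ⊗ s(m₍₁₎)·v`. -/
def tauZero {M V : Type} [AddCommGroup M] [Module k M] [AddCommGroup V] [Module k V]
    (ρ : M →ₗ[k] M ⊗[k] H) (actV : H ⊗[k] V →ₗ[k] V) (s : H →ₗ[k] H) :
    M ⊗[k] V →ₗ[k] M ⊗[k] V :=
  (LinearMap.lTensor M (actV ∘ₗ LinearMap.rTensor V s)) ∘ₗ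
  (TensorProduct.assoc k M H V).toLinearMap ∘ₗ
  (LinearMap.rTensor V ρ)

end



open TensorProduct Coalgebra

noncomputable section

variable {k : Type} [Field k]

section Conv
variable {C : Type} [AddCommGroup C] [Module k C] [Coalgebra k C]
variable {H : Type} [Ring H] [Algebra k H]

/-- Convolution product of linear maps from a coalgebra to an algebra. -/
def conv (f g : C →ₗ[k] H) : C →ₗ[k] H :=
  LinearMap.mul' k H ∘ₗ TensorProduct.map f g ∘ₗ Coalgebra.comul

lemma conv_repr {ι : Type*} (f g : C →ₗ[k] H) (x : C) (r : Coalgebra.Repr k x ι) :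
    conv f g x = ∑ i ∈ r.index, f (r.left i) * g (r.right i) := by
  simp only [conv, LinearMap.comp_apply, ← r.eq, map_sum, TensorProduct.map_tmul,
    LinearMap.mul'_apply]

/-- the convolution unit -/
def cunit : C →ₗ[k] H := Algebra.linearMap k H ∘ₗ Coalgebra.counit

lemma conv_cunit_right (f : C →ₗ[k] H) : conv f cunit = f := by
  ext x
  set r := ℛ k x
  rw [conv_repr f cunit x r]
  have h0 := Coalgebra.sum_tmul_counit_eq r
  apply_fun (TensorProduct.rid k C) at h0
  simp only [map_sum, TensorProduct.rid_tmul, one_smul] at h0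
  calc ∑ i ∈ r.index, f (r.left i) * cunit (r.right i)
      = f (∑ i ∈ r.index, counit (R := k) (r.right i) • r.left i) := by
        rw [map_sum]
        refine Finset.sum_congr rfl fun i _ => ?_
        simp only [cunit, LinearMap.comp_apply, Algebra.linearMap_apply, map_smul,
          Algebra.smul_def]
        exact (Algebra.commutes _ _).symm
    _ = f x := by rw [h0]

lemma conv_cunit_left (f : C →ₗ[k] H) : conv cunit f = f := by
  ext x
  set r := ℛ k x
  rw [conv_repr cunit f x r]
  have h0 := Coalgebra.sum_counit_tmul_eq r
  apply_fun (TensorProduct.lid k C) at h0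
  simp only [map_sum, TensorProduct.lid_tmul, one_smul] at h0
  calc ∑ i ∈ r.index, cunit (r.left i) * f (r.right i)
      = f (∑ i ∈ r.index, counit (R := k) (r.left i) • r.right i) := by
        rw [map_sum]
        refine Finset.sum_congr rfl fun i _ => ?_
        simp [cunit, Algebra.smul_def, map_smul]
    _ = f x := by rw [h0]

lemma conv_assoc (f g h : C →ₗ[k] H) : conv (conv f g) h = conv f (conv g h) := by
  ext x
  set r := ℛ k x with hr
  have key := Coalgebra.sum_tmul_tmul_eq r (fun i => ℛ k (r.left i)) (fun i => ℛ k (r.right i))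
  set π : C ⊗[k] (C ⊗[k] C) →ₗ[k] H :=
    LinearMap.mul' k H ∘ₗ LinearMap.lTensor H (LinearMap.mul' k H) ∘ₗ
      TensorProduct.map f (TensorProduct.map g h) with hπ
  have hπ' : ∀ a b c : C, π (a ⊗ₜ (b ⊗ₜ c)) = f a * (g b * h c) := by
    intro a b c; simp [hπ]
  apply_fun π at key
  simp only [map_sum, hπ'] at key
  rw [conv_repr (conv f g) h x r, conv_repr f (conv g h) x r]
  calc ∑ i ∈ r.index, conv f g (r.left i) * h (r.right i)
      = ∑ i ∈ r.index, ∑ j ∈ (ℛ k (r.left i)).index,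
          f ((ℛ k (r.left i)).left j) * (g ((ℛ k (r.left i)).right j) * h (r.right i)) := by
        refine Finset.sum_congr rfl fun i _ => ?_
        rw [conv_repr f g _ (ℛ k (r.left i)), Finset.sum_mul]
        exact Finset.sum_congr rfl fun j _ => (mul_assoc _ _ _)
    _ = ∑ i ∈ r.index, ∑ j ∈ (ℛ k (r.right i)).index,
          f (r.left i) * (g ((ℛ k (r.right i)).left j) * h ((ℛ k (r.right i)).right j)) := key
    _ = ∑ i ∈ r.index, f (r.left i) * conv g h (r.right i) := by
        refine Finset.sum_congr rfl fun i _ => ?_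
        rw [conv_repr g h _ (ℛ k (r.right i)), Finset.mul_sum]

end Conv
section Antipode
variable {k : Type} [Field k] {H : Type} [Ring H] [HopfAlgebra k H]

open HopfAlgebra

local notation "S'" => HopfAlgebra.antipode (R := k) (A := H)

lemma antipode_one' : S' (1 : H) = 1 := by
  have := mul_antipode_rTensor_comul_apply (R := k) (1 : H)
  rw [Bialgebra.comul_one, Algebra.TensorProduct.one_def] at this
  simpa using this

/-- explicit `Repr` for a pure tensor in the tensor-product coalgebra -/
def tmulRepr {ι₁ ι₂ : Type*} (a b : H) (ra : Coalgebra.Repr k a ι₁) (rb : Coalgebra.Repr k b ι₂) :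
    Coalgebra.Repr k (a ⊗ₜ[k] b) (ι₁ × ι₂) where
  index := ra.index ×ˢ rb.index
  left := fun p => ra.left p.1 ⊗ₜ rb.left p.2
  right := fun p => ra.right p.1 ⊗ₜ rb.right p.2
  eq := by
    rw [Finset.sum_product]
    have : Coalgebra.comul (R := k) (a ⊗ₜ[k] b) =
        TensorProduct.tensorTensorTensorComm k H H H H
          (Coalgebra.comul (R := k) a ⊗ₜ[k] Coalgebra.comul (R := k) b) := by
      simp [TensorProduct.AlgebraTensorModule.tensorTensorTensorComm_eq]
    rw [this, ← ra.eq, ← rb.eq, TensorProduct.sum_tmul]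
    simp only [TensorProduct.tmul_sum, map_sum, TensorProduct.tensorTensorTensorComm_tmul]

lemma antipode_mul_antidistrib' (a b : H) : S' (a * b) = S' b * S' a := by
  set F : H ⊗[k] H →ₗ[k] H := (S' : H →ₗ[k] H) ∘ₗ LinearMap.mul' k H with hF
  set G : H ⊗[k] H →ₗ[k] H :=
    LinearMap.mul' k H ∘ₗ TensorProduct.map S' S' ∘ₗ (TensorProduct.comm k H H).toLinearMap
    with hG
  set Mu : H ⊗[k] H →ₗ[k] H := LinearMap.mul' k H with hMu
  have h1 : conv F Mu = cunit := by
    apply TensorProduct.ext'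
    intro x y
    set rx := ℛ k x; set ry := ℛ k y
    rw [conv_repr F Mu _ (tmulRepr x y rx ry)]
    have key : ∑ p ∈ rx.index ×ˢ ry.index,
        (rx.left p.1 * ry.left p.2) ⊗ₜ[k] (rx.right p.1 * ry.right p.2) =
        Coalgebra.comul (R := k) (x * y) := by
      rw [Bialgebra.comul_mul, ← rx.eq, ← ry.eq, Finset.sum_mul_sum, Finset.sum_product]
      simp [Algebra.TensorProduct.tmul_mul_tmul]
    calc ∑ p ∈ rx.index ×ˢ ry.index,
          F (rx.left p.1 ⊗ₜ ry.left p.2) * Mu (rx.right p.1 ⊗ₜ ry.right p.2)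
        = LinearMap.mul' k H ((LinearMap.rTensor H (S' : H →ₗ[k] H))
            (∑ p ∈ rx.index ×ˢ ry.index,
              (rx.left p.1 * ry.left p.2) ⊗ₜ[k] (rx.right p.1 * ry.right p.2))) := by
          simp [hF, hMu, map_sum]
      _ = cunit (x ⊗ₜ y) := by
          rw [key, mul_antipode_rTensor_comul_apply]
          simp [cunit]
          exact Algebra.commutes _ _
  have h2 : conv Mu G = cunit := by
    apply TensorProduct.ext'
    intro x y
    set rx := ℛ k x; set ry := ℛ k y
    rw [conv_repr Mu G _ (tmulRepr x y rx ry)]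
    show (∑ p ∈ rx.index ×ˢ ry.index,
        Mu (rx.left p.1 ⊗ₜ ry.left p.2) * G (rx.right p.1 ⊗ₜ ry.right p.2)) = _
    have step : ∀ p ∈ rx.index ×ˢ ry.index,
        Mu (rx.left p.1 ⊗ₜ ry.left p.2) * G (rx.right p.1 ⊗ₜ ry.right p.2) =
        rx.left p.1 * ((ry.left p.2 * S' (ry.right p.2)) * S' (rx.right p.1)) := by
      intro p _
      simp only [hMu, hG, LinearMap.mul'_apply, LinearMap.comp_apply,
        LinearEquiv.coe_coe, TensorProduct.comm_tmul, TensorProduct.map_tmul]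
      noncomm_ring
    rw [Finset.sum_congr rfl step, Finset.sum_product]
    have inner : ∀ i, ∑ j ∈ ry.index,
        rx.left i * ((ry.left j * S' (ry.right j)) * S' (rx.right i)) =
        Coalgebra.counit (R := k) y • (rx.left i * S' (rx.right i)) := by
      intro i
      rw [← Finset.mul_sum, ← Finset.sum_mul, sum_mul_antipode_eq_smul ry]
      simp [smul_mul_assoc, mul_smul_comm]
    rw [Finset.sum_congr rfl (fun i _ => inner i), ← Finset.smul_sum,
      sum_mul_antipode_eq_smul rx]
    simp [cunit, Algebra.smul_def, smul_smul]
  have hFG : F = G := by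
    calc F = conv F cunit := (conv_cunit_right F).symm
      _ = conv F (conv Mu G) := by rw [h2]
      _ = conv (conv F Mu) G := (conv_assoc F Mu G).symm
      _ = conv cunit G := by rw [h1]
      _ = G := conv_cunit_left G
  have := congrArg (fun f : H ⊗[k] H →ₗ[k] H => f (a ⊗ₜ b)) hFG
  simpa [hF, hG, hMu] using this

end Antipode
section Powers
variable {k : Type} [Field k] {H : Type} [Ring H] [HopfAlgebra k H]
variable (S : H ≃ₗ[k] H) (hS : ∀ h : H, S h = HopfAlgebra.antipode (R := k) h)

lemma zpow_apply_add (p q : ℤ) (x : H) : (S ^ (p + q)) x = (S ^ p) ((S ^ q) x) := by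
  rw [zpow_add]; rfl

lemma zpow_neg_one_apply (x : H) : (S ^ (-1 : ℤ)) x = S.symm x := by
  rw [zpow_neg_one]; rfl

include hS

lemma S_anti (a b : H) : S (a * b) = S b * S a := by
  rw [hS, hS, hS]; exact antipode_mul_antidistrib' a b

lemma S_one : S (1 : H) = 1 := by rw [hS]; exact antipode_one'

lemma Ssymm_anti (a b : H) : S.symm (a * b) = S.symm b * S.symm a := by
  apply S.injective
  rw [S.apply_symm_apply, S_anti S hS, S.apply_symm_apply, S.apply_symm_apply]

lemma Ssymm_one : S.symm (1 : H) = 1 := by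
  apply S.injective
  rw [S.apply_symm_apply, S_one S hS]

/-- even integer powers of `S` are multiplicative, odd ones anti-multiplicative, all unital. -/
lemma S_parity (n : ℤ) :
    (∀ a b : H, (S ^ (2 * n)) (a * b) = (S ^ (2 * n)) a * (S ^ (2 * n)) b)
    ∧ (S ^ (2 * n)) (1 : H) = 1
    ∧ (∀ a b : H, (S ^ (2 * n - 1)) (a * b) = (S ^ (2 * n - 1)) b * (S ^ (2 * n - 1)) a)
    ∧ (S ^ (2 * n - 1)) (1 : H) = 1 := by
  induction n using Int.induction_on with
  | zero =>
    refine ⟨by simp, by simp, ?_, ?_⟩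
    · intro a b
      have h1 : (2 * (0:ℤ) - 1) = -1 := by norm_num
      rw [h1, zpow_neg_one_apply, zpow_neg_one_apply, zpow_neg_one_apply,
        Ssymm_anti S hS]
    · have h1 : (2 * (0:ℤ) - 1) = -1 := by norm_num
      rw [h1, zpow_neg_one_apply, Ssymm_one S hS]
  | succ m ih =>
    obtain ⟨e_mul, e_one, o_anti, o_one⟩ := ih
    have h2 : (2 * ((m : ℤ) + 1)) = 1 + (1 + 2 * (m:ℤ)) := by ring
    have h3 : (2 * ((m : ℤ) + 1) - 1) = 1 + 2 * (m:ℤ) := by ring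
    have odd_apply : ∀ x : H, (S ^ (1 + 2 * (m:ℤ))) x = S ((S ^ (2 * (m:ℤ))) x) := by
      intro x; rw [zpow_apply_add S 1 (2*(m:ℤ)) x, zpow_one]
    have new_o_anti : ∀ a b : H, (S ^ (1 + 2 * (m:ℤ))) (a * b) =
        (S ^ (1 + 2 * (m:ℤ))) b * (S ^ (1 + 2 * (m:ℤ))) a := by
      intro a b
      rw [odd_apply, odd_apply, odd_apply, e_mul, S_anti S hS]
    have new_o_one : (S ^ (1 + 2 * (m:ℤ))) (1 : H) = 1 := by
      rw [odd_apply, e_one, S_one S hS]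
    have ev2 : ∀ x : H, (S ^ (2 * ((m:ℤ) + 1))) x = S ((S ^ (1 + 2 * (m:ℤ))) x) := by
      intro x; rw [h2, zpow_apply_add S 1 (1 + 2*(m:ℤ)) x, zpow_one]
    refine ⟨?_, ?_, ?_, ?_⟩
    · intro a b
      rw [ev2, ev2, ev2, new_o_anti, S_anti S hS]
    · rw [ev2, new_o_one, S_one S hS]
    · intro a b
      rw [h3]; exact new_o_anti a b
    · rw [h3]; exact new_o_one
  | pred m ih =>
    obtain ⟨e_mul, e_one, o_anti, o_one⟩ := ih
    have symm_apply : ∀ (p : ℤ) (x : H), (S ^ (p - 1)) x = (S ^ p) (S.symm x) := by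
      intro p x
      have h : p - 1 = p + (-1) := by ring
      rw [h, zpow_apply_add S p (-1) x, zpow_neg_one_apply]
    have h2 : (2 * (-(m : ℤ) - 1)) = (2 * (-(m:ℤ)) - 1) - 1 := by ring
    have evE : ∀ x : H, (S ^ (2 * (-(m:ℤ) - 1))) x = (S ^ (2 * (-(m:ℤ)) - 1)) (S.symm x) := by
      intro x; rw [h2]; exact symm_apply (2*(-(m:ℤ))-1) x
    have evO : ∀ x : H, (S ^ (2 * (-(m:ℤ) - 1) - 1)) x = (S ^ (2 * (-(m:ℤ) - 1))) (S.symm x) :=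
      fun x => symm_apply (2*(-(m:ℤ)-1)) x
    have new_e_mul : ∀ a b : H, (S ^ (2 * (-(m:ℤ) - 1))) (a * b) =
        (S ^ (2 * (-(m:ℤ) - 1))) a * (S ^ (2 * (-(m:ℤ) - 1))) b := by
      intro a b
      rw [evE, evE, evE, Ssymm_anti S hS, o_anti]
    have new_e_one : (S ^ (2 * (-(m:ℤ) - 1))) (1 : H) = 1 := by
      rw [evE, Ssymm_one S hS, o_one]
    refine ⟨new_e_mul, new_e_one, ?_, ?_⟩
    · intro a b
      rw [evO, evO, evO, Ssymm_anti S hS, new_e_mul]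
    · rw [evO, Ssymm_one S hS, new_e_one]

end Powers
section Key
variable {k : Type} [Field k] {H : Type} [Ring H] [HopfAlgebra k H]

open HopfAlgebra

lemma key_collapse {ι κ : Type*} (h : H) (r : Coalgebra.Repr k h ι)
    (s : ∀ i : r.ι, Coalgebra.Repr k (r.right i) κ) :
    ∑ i ∈ r.index, ∑ j ∈ (s i).index,
      (HopfAlgebra.antipode (R := k) (r.left i) * (s i).left j) ⊗ₜ[k] (s i).right j
      = (1 : H) ⊗ₜ[k] h := by
  classical
  have key := Coalgebra.sum_tmul_tmul_eq r (fun i => ℛ k (r.left i)) s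
  set Ψ : H ⊗[k] (H ⊗[k] H) →ₗ[k] H ⊗[k] H :=
    (LinearMap.rTensor H (LinearMap.mul' k H ∘ₗ
      LinearMap.rTensor H (HopfAlgebra.antipode (R := k)))) ∘ₗ
      (TensorProduct.assoc k H H H).symm.toLinearMap with hΨ
  have hΨ' : ∀ x y z : H, Ψ (x ⊗ₜ (y ⊗ₜ z)) =
      (HopfAlgebra.antipode (R := k) x * y) ⊗ₜ z := by
    intro x y z; simp [hΨ]
  apply_fun Ψ at key
  simp only [map_sum, hΨ'] at key
  rw [← key]
  have inner : ∀ i ∈ r.index, (∑ j ∈ (ℛ k (r.left i)).index,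
      (HopfAlgebra.antipode (R := k) ((ℛ k (r.left i)).left j) *
        (ℛ k (r.left i)).right j) ⊗ₜ[k] r.right i)
      = (1 : H) ⊗ₜ[k] (Coalgebra.counit (R := k) (r.left i) • r.right i) := by
    intro i _
    rw [← TensorProduct.sum_tmul, sum_antipode_mul_eq_smul (ℛ k (r.left i))]
    rw [TensorProduct.smul_tmul]
  rw [Finset.sum_congr rfl inner, ← TensorProduct.tmul_sum]
  congr 1
  have h0 := Coalgebra.sum_counit_tmul_eq r
  apply_fun (TensorProduct.lid k H) at h0
  simp only [map_sum, TensorProduct.lid_tmul, one_smul] at h0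
  exact h0

end Key
open TensorProduct Coalgebra

set_option maxHeartbeats 1000000 in
/-- if `M` satisfies the generalized YD condition of degree `-i`,
`ρ(hm) = h₍₂₎m₍₀₎ ⊗ h₍₃₎m₍₁₎ S^{2i-1}(h₍₁₎)`, then `Φ(v ⊗ m) = m₍₀₎ ⊗ m₍₁₎v` is `H`-linear
from `V^{S^{2i}} ⊗ M` (left factor twisted by `S^{2i}`) to `M ⊗ V` (diagonal action). -/
theorem statement5
    (k : Type) [Field k] (H : Type) [Ring H] [HopfAlgebra k H]
    (S : H ≃ₗ[k] H) (hS : ∀ h : H, S h = HopfAlgebra.antipode (R := k) h)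
    (M : Type) [AddCommGroup M] [Module k M] [Module H M]
    [IsScalarTower k H M] [SMulCommClass k H M]
    (ρ : M →ₗ[k] M ⊗[k] H) (i : ℤ)
    (hYD : ∀ (h : H) (m : M),
        ρ (h • m) =
          twistR k H (ydR k H (actM k H M) ρ) (S ^ (2 * i - 1)).toLinearMap (h ⊗ₜ[k] m))
    (V : Type) [AddCommGroup V] [Module k V] [Module H V]
    [IsScalarTower k H V] [SMulCommClass k H V] :
    ∀ (h : H) (x : V ⊗[k] M),
      PhiMap k H ρ (actM k H V)
          (diagAct k H ((smulL k H V) ∘ₗ (S ^ (2 * i)).toLinearMap) (smulL k H M) h x) =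
        diagAct k H (smulL k H M) (smulL k H V) h (PhiMap k H ρ (actM k H V) x) := by
  intro h x
  induction x using TensorProduct.induction_on with
  | zero => simp
  | add y z hy hz => simp only [map_add, hy, hz]
  | tmul v m =>
  classical
  obtain ⟨-, -, T_anti, T_one⟩ := S_parity S hS i
  have σ_eq : ∀ a : H, (S ^ (2 * i)) a
      = (S ^ (2 * i - 1)) (HopfAlgebra.antipode (R := k) a) := by
    intro a
    have h1 : (S ^ ((2 * i - 1) + 1)) a = (S ^ (2 * i - 1)) (S a) := by
      rw [zpow_apply_add S (2 * i - 1) 1 a, zpow_one]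
    rw [hS] at h1
    have e : 2 * i - 1 + 1 = 2 * i := by ring
    rw [e] at h1
    exact h1
  set ξ : M ⊗[k] H →ₗ[k] M ⊗[k] V := LinearMap.lTensor M ((smulL k H V).flip v) with hξ
  set Ym : H →ₗ[k] M ⊗[k] H :=
    (ydR k H (actM k H M) ρ) ∘ₗ ((TensorProduct.mk k H M).flip m) with hYm
  set Θ : H ⊗[k] H →ₗ[k] M ⊗[k] V := ξ ∘ₗ LinearMap.lTensor M (LinearMap.mul' k H) ∘ₗ
      (TensorProduct.assoc k M H H).toLinearMap ∘ₗ
      (TensorProduct.comm k H (M ⊗[k] H)).toLinearMap ∘ₗ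
      TensorProduct.map LinearMap.id Ym with hΘ
  set r := ℛ k h with hr
  set s : ∀ j : r.ι, Coalgebra.Repr k (r.right j) (H × H) := fun j => ℛ k (r.right j) with hs
  -- expand the twisted diagonal action on the pure tensor
  have step1 : diagAct k H ((smulL k H V) ∘ₗ (S ^ (2 * i)).toLinearMap) (smulL k H M) h
      (v ⊗ₜ[k] m)
      = ∑ j ∈ r.index, (((S ^ (2 * i)) (r.left j)) • v) ⊗ₜ[k] (r.right j • m) := by
    simp only [diagAct, LinearMap.comp_apply]
    rw [← r.eq]
    simp [smulL, map_sum]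
  -- Φ on a pure tensor whose left factor is an `a • v`
  have phiterm : ∀ (a b : H), PhiMap k H ρ (actM k H V) ((a • v) ⊗ₜ[k] (b • m))
      = ξ (LinearMap.lTensor M (LinearMap.mulRight k a) (ρ (b • m))) := by
    intro a b
    simp only [PhiMap, LinearMap.comp_apply, LinearEquiv.coe_coe, TensorProduct.comm_tmul,
      LinearMap.rTensor_tmul]
    generalize ρ (b • m) = z
    induction z using TensorProduct.induction_on with
    | zero => simp
    | add z₁ z₂ h₁ h₂ => simp only [map_add, TensorProduct.add_tmul, h₁, h₂]
    | tmul n c =>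
      simp [hξ, actM, smulL, TensorProduct.assoc_tmul, mul_smul]
  -- auxiliary: sliding a right multiplication into the `H`-leg
  have sub : ∀ (z : M ⊗[k] H) (u y' : H),
      ξ ((LinearMap.lTensor M (LinearMap.mulRight k y'))
        ((LinearMap.lTensor M (LinearMap.mul' k H))
          ((TensorProduct.assoc k M H H) (z ⊗ₜ[k] u)))) =
      ξ ((LinearMap.lTensor M (LinearMap.mul' k H))
        ((TensorProduct.assoc k M H H) (z ⊗ₜ[k] (u * y')))) := by
    intro z u y'
    induction z using TensorProduct.induction_on with
    | zero => simp
    | add z₁ z₂ h₁ h₂ => simp only [TensorProduct.add_tmul, map_add, h₁, h₂]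
    | tmul n c => simp [mul_assoc]
  -- core rewriting of the twisted coaction term
  have tw2 : ∀ (y b : H), ξ (LinearMap.lTensor M (LinearMap.mulRight k y)
      (twistR k H (ydR k H (actM k H M) ρ) (S ^ (2 * i - 1)).toLinearMap (b ⊗ₜ[k] m)))
      = Θ ((TensorProduct.map
          (LinearMap.mulRight k y ∘ₗ (S ^ (2 * i - 1)).toLinearMap) LinearMap.id)
          (Coalgebra.comul (R := k) b)) := by
    intro y b
    simp only [twistR, LinearMap.comp_apply, LinearMap.rTensor_tmul]
    generalize Coalgebra.comul (R := k) b = w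
    induction w using TensorProduct.induction_on with
    | zero => simp
    | add w₁ w₂ h₁ h₂ => simp only [map_add, TensorProduct.add_tmul, h₁, h₂]
    | tmul c d =>
      simp only [TensorProduct.assoc_tmul, TensorProduct.map_tmul, LinearEquiv.coe_coe,
        TensorProduct.comm_tmul]
      rw [sub]
      simp only [hΘ, LinearMap.comp_apply, TensorProduct.map_tmul, LinearMap.id_coe, id_eq,
        hYm, TensorProduct.mk_apply, LinearMap.flip_apply, LinearEquiv.coe_coe,
        TensorProduct.comm_tmul, LinearMap.mulRight_apply, LinearEquiv.coe_toLinearMap,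
        TensorProduct.mk_apply]
  -- the right-hand side as Θ (1 ⊗ h) : generic version
  have sub2 : ∀ (w : H ⊗[k] H) (z : M ⊗[k] H),
      TensorProduct.homTensorHomMap (R := k) (R₂ := k) (σ₁₂ := RingHom.id k) (M := M) (N := V)
        (M₂ := M) (N₂ := V)
        (TensorProduct.map (smulL k H M) (smulL k H V) w) (ξ z) =
      ξ ((LinearMap.lTensor M (LinearMap.mul' k H))
        ((TensorProduct.assoc k M H H) ((TensorProduct.comm k H (M ⊗[k] H))
          ((1 : H) ⊗ₜ[k] (TensorProduct.map (actM k H M) (LinearMap.mul' k H)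
            ((TensorProduct.tensorTensorTensorComm k H H M H) (w ⊗ₜ[k] z))))))) := by
    intro w z
    induction w using TensorProduct.induction_on with
    | zero => simp
    | add w₁ w₂ h₁ h₂ =>
      simp only [map_add, TensorProduct.add_tmul, TensorProduct.tmul_add, LinearMap.add_apply,
        h₁, h₂]
    | tmul a b =>
      induction z using TensorProduct.induction_on with
      | zero => simp
      | add z₁ z₂ h₁ h₂ =>
        simp only [map_add, TensorProduct.tmul_add, TensorProduct.add_tmul, LinearMap.add_apply,
          h₁, h₂]
      | tmul n c =>
        simp [smulL, actM, TensorProduct.tensorTensorTensorComm_tmul, mul_smul, hξ]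
  have rhs_eq : diagAct k H (smulL k H M) (smulL k H V) h
      (PhiMap k H ρ (actM k H V) (v ⊗ₜ[k] m)) = Θ ((1 : H) ⊗ₜ[k] h) := by
    have phim : PhiMap k H ρ (actM k H V) (v ⊗ₜ[k] m) = ξ (ρ m) := by
      simp only [PhiMap, LinearMap.comp_apply, LinearEquiv.coe_coe, TensorProduct.comm_tmul,
        LinearMap.rTensor_tmul]
      generalize ρ m = z
      induction z using TensorProduct.induction_on with
      | zero => simp
      | add z₁ z₂ h₁ h₂ => simp only [map_add, TensorProduct.add_tmul, h₁, h₂]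
      | tmul n c => simp [hξ, actM, smulL, TensorProduct.assoc_tmul]
    rw [phim]
    simp only [diagAct, LinearMap.comp_apply, hΘ, hYm, TensorProduct.map_tmul,
      LinearMap.id_coe, id_eq, TensorProduct.mk_apply, LinearMap.flip_apply, ydR,
      LinearEquiv.coe_coe]
    exact sub2 (Coalgebra.comul (R := k) h) (ρ m)
  -- put everything together
  rw [rhs_eq, step1, map_sum]
  have perterm : ∀ j ∈ r.index,
      PhiMap k H ρ (actM k H V) (((S ^ (2 * i)) (r.left j) • v) ⊗ₜ[k] (r.right j • m))
      = ∑ l ∈ (s j).index, (Θ ∘ₗ LinearMap.rTensor H (S ^ (2 * i - 1)).toLinearMap)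
          ((HopfAlgebra.antipode (R := k) (r.left j) * (s j).left l) ⊗ₜ[k] (s j).right l) := by
    intro j _
    rw [phiterm, hYD, tw2, ← (s j).eq, map_sum, map_sum]
    refine Finset.sum_congr rfl fun l _ => ?_
    simp only [TensorProduct.map_tmul, LinearMap.comp_apply, LinearMap.id_coe, id_eq,
      LinearMap.mulRight_apply, LinearMap.rTensor_tmul, LinearEquiv.coe_toLinearMap]
    rw [σ_eq, ← T_anti]
  rw [Finset.sum_congr rfl perterm]
  simp only [← map_sum]
  rw [key_collapse h r s]
  simp only [LinearMap.comp_apply, LinearMap.rTensor_tmul, LinearEquiv.coe_toLinearMap, T_one]
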